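/- Let a, b, w, ℓ ∈ ℕ with a ≥ 2, b ≥ 1, w ≥ 2 and ℓ ≥ 1. Every K_{a,b}-free bipartite graph G = (A, B, E) such that deg_G(v) ≤ ℓ for every v ∈ A and |A| ≥ a · ((w−1)·ℓ)^b contains a sunflower S ⊆ A with |S| = w. -/

import Mathlib

/-- Neighborhood of a left vertex `v` in the bipartite graph `(A, B, E)`. -/
def bipNbhd {α β : Type*} [DecidableEq α] [DecidableEq β]
    (B : Finset β) (E : Finset (α × β)) (v : α) : Finset β :=
  B.filter (fun u => (v, u) ∈ E)

/-- `(A, B, E)` is `K_{a,b}`-free: there are no `S ⊆ A`, `T ⊆ B` with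
`|S| = a`, `|T| = b` and `S × T ⊆ E`. -/
def bipKabFree {α β : Type*} [DecidableEq α] [DecidableEq β]
    (A : Finset α) (B : Finset β) (E : Finset (α × β)) (a b : ℕ) : Prop :=
  ¬ ∃ (S : Finset α) (T : Finset β),
      S ⊆ A ∧ T ⊆ B ∧ S.card = a ∧ T.card = b ∧ S ×ˢ T ⊆ E

/-- `S ⊆ A` is a sunflower: there is a core `K ⊆ B` with
`N(v) ∩ N(v') = K` for all distinct `v, v' ∈ S`. -/
def bipSunflower {α β : Type*} [DecidableEq α] [DecidableEq β]
    (B : Finset β) (E : Finset (α × β)) (S : Finset α) : Prop :=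
  ∃ K : Finset β, ∀ v ∈ S, ∀ v' ∈ S, v ≠ v' →
    bipNbhd B E v ∩ bipNbhd B E v' = K

theorem key_lemma {α β : Type*} [DecidableEq α] [DecidableEq β]
    (A : Finset α) (B : Finset β) (E : Finset (α × β))
    (a b w ℓ : ℕ) (ha : 2 ≤ a) (hw : 2 ≤ w) (hℓ : 1 ≤ ℓ)
    (hfree : bipKabFree A B E a b)
    (hdeg : ∀ v ∈ A, (bipNbhd B E v).card ≤ ℓ) :
    ∀ (b' : ℕ) (C : Finset β) (A' : Finset α),
      A' ⊆ A → C ⊆ B → (∀ v ∈ A', C ⊆ bipNbhd B E v) →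
      C.card + b' = b → a * ((w - 1) * ℓ) ^ b' ≤ A'.card →
      ∃ S ⊆ A, S.card = w ∧ bipSunflower B E S := by
  classical
  intro b'
  induction b' with
  | zero =>
    intro C A' hA'A hCB hCN hcard hbig
    exfalso
    apply hfree
    simp only [pow_zero, mul_one] at hbig
    obtain ⟨S, hSA', hScard⟩ := A'.exists_subset_card_eq hbig
    refine ⟨S, C, hSA'.trans hA'A, hCB, hScard, by omega, ?_⟩
    intro p hp
    rw [Finset.mem_product] at hp
    have hv : p.1 ∈ A' := hSA' hp.1
    have hu : p.2 ∈ bipNbhd B E p.1 := hCN _ hv hp.2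
    simp only [bipNbhd, Finset.mem_filter] at hu
    exact hu.2
  | succ b'' ih =>
    intro C A' hA'A hCB hCN hcard hbig
    set M := (w - 1) * ℓ with hMdef
    have hM1 : 1 ≤ M := by
      have h1 : 1 ≤ w - 1 := by omega
      calc 1 = 1 * 1 := by ring
        _ ≤ (w - 1) * ℓ := Nat.mul_le_mul h1 hℓ
    set N := fun v => bipNbhd B E v with hNdef
    set red := fun v => bipNbhd B E v \ C with hreddef
    set A0 := A'.filter (fun v => red v = ∅) with hA0def
    set A1 := A'.filter (fun v => red v ≠ ∅) with hA1def
    have hA1A' : A1 ⊆ A' := Finset.filter_subset _ _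
    have hA0A' : A0 ⊆ A' := Finset.filter_subset _ _
    -- maximal pairwise-disjoint subfamily
    set T : Finset (Finset α) := A1.powerset.filter
      (fun D => ∀ v ∈ D, ∀ v' ∈ D, v ≠ v' → Disjoint (red v) (red v')) with hTdef
    have hTne : T.Nonempty := ⟨∅, by simp [hTdef]⟩
    obtain ⟨D, hDT, hDmax⟩ := T.exists_maximal hTne
    rw [hTdef, Finset.mem_filter, Finset.mem_powerset] at hDT
    obtain ⟨hDA1, hDdisj⟩ := hDT
    -- D ∪ A0 is a sunflower with core C
    have hsun : ∀ v ∈ D ∪ A0, ∀ v' ∈ D ∪ A0, v ≠ v' →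
        bipNbhd B E v ∩ bipNbhd B E v' = C := by
      intro v hv v' hv' hne
      have hvA' : v ∈ A' := by
        rcases Finset.mem_union.mp hv with h | h
        exacts [hA1A' (hDA1 h), hA0A' h]
      have hv'A' : v' ∈ A' := by
        rcases Finset.mem_union.mp hv' with h | h
        exacts [hA1A' (hDA1 h), hA0A' h]
      apply Finset.Subset.antisymm
      · intro x hx
        rw [Finset.mem_inter] at hx
        by_contra hxC
        have hx1 : x ∈ red v := Finset.mem_sdiff.mpr ⟨hx.1, hxC⟩
        have hx2 : x ∈ red v' := Finset.mem_sdiff.mpr ⟨hx.2, hxC⟩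
        rcases Finset.mem_union.mp hv with h | h
        · rcases Finset.mem_union.mp hv' with h' | h'
          · exact (Finset.disjoint_left.mp (hDdisj v h v' h' hne) hx1) hx2
          · rw [Finset.mem_filter] at h'
            simp [h'.2] at hx2
        · rw [Finset.mem_filter] at h
          simp [h.2] at hx1
      · exact Finset.subset_inter (hCN v hvA') (hCN v' hv'A')
    by_cases hbig0 : w ≤ (D ∪ A0).card
    · obtain ⟨S, hSsub, hScard⟩ := (D ∪ A0).exists_subset_card_eq hbig0
      refine ⟨S, ?_, hScard, C, ?_⟩
      · intro x hx
        have := hSsub hx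
        rcases Finset.mem_union.mp this with h | h
        exacts [hA'A (hA1A' (hDA1 h)), hA'A (hA0A' h)]
      · intro v hv v' hv' hne
        exact hsun v (hSsub hv) v' (hSsub hv') hne
    · push_neg at hbig0
      have hDA0disj : Disjoint D A0 := by
        rw [Finset.disjoint_left]
        intro x hxD hxA0
        have h1 := Finset.mem_filter.mp (hDA1 hxD)
        have h2 := Finset.mem_filter.mp hxA0
        exact h1.2 h2.2
      have hkd : D.card + A0.card ≤ w - 1 := by
        have := Finset.card_union_of_disjoint hDA0disj
        omega
      set Y := D.biUnion red with hYdef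
      have hYcard : Y.card ≤ D.card * ℓ := by
        calc Y.card ≤ ∑ v ∈ D, (red v).card := Finset.card_biUnion_le
          _ ≤ ∑ v ∈ D, ℓ := by
              apply Finset.sum_le_sum
              intro v hv
              calc (red v).card ≤ (bipNbhd B E v).card :=
                    Finset.card_le_card (Finset.sdiff_subset)
                _ ≤ ℓ := hdeg v (hA'A (hA1A' (hDA1 hv)))
          _ = D.card * ℓ := by rw [Finset.sum_const, smul_eq_mul]
      have hmeet : ∀ v ∈ A1, (red v ∩ Y).Nonempty := by
        intro v hv
        have hvne : red v ≠ ∅ := (Finset.mem_filter.mp hv).2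
        by_cases hvD : v ∈ D
        · have hsub : red v ⊆ Y := Finset.subset_biUnion_of_mem red hvD
          rw [Finset.inter_eq_left.mpr hsub]
          exact Finset.nonempty_iff_ne_empty.mpr hvne
        · by_contra hemp
          rw [Finset.not_nonempty_iff_eq_empty, ← Finset.disjoint_iff_inter_eq_empty] at hemp
          have hins : insert v D ∈ T := by
            rw [hTdef, Finset.mem_filter, Finset.mem_powerset]
            constructor
            · exact Finset.insert_subset hv hDA1
            · intro x hx x' hx' hne
              rcases Finset.mem_insert.mp hx with rfl | hxD
              · rcases Finset.mem_insert.mp hx' with rfl | hx'D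
                · exact absurd rfl hne
                · exact Finset.disjoint_of_subset_right
                    (Finset.subset_biUnion_of_mem red hx'D) hemp
              · rcases Finset.mem_insert.mp hx' with rfl | hx'D
                · exact (Finset.disjoint_of_subset_right
                    (Finset.subset_biUnion_of_mem red hxD) hemp).symm
                · exact hDdisj x hxD x' hx'D hne
          exact hvD (hDmax hins (Finset.subset_insert v D) (Finset.mem_insert_self v D))
      -- counting
      have hsum : A1.card ≤ ∑ y ∈ Y, (A1.filter (fun v => y ∈ red v)).card := by
        have h1 : A1.card = ∑ v ∈ A1, 1 := by simp
        have h2 : ∀ v ∈ A1, 1 ≤ (red v ∩ Y).card := by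
          intro v hv
          exact Finset.card_pos.mpr (hmeet v hv)
        calc A1.card = ∑ v ∈ A1, 1 := h1
          _ ≤ ∑ v ∈ A1, (red v ∩ Y).card := Finset.sum_le_sum h2
          _ = ∑ v ∈ A1, (Y.filter (fun y => y ∈ red v)).card := by
              apply Finset.sum_congr rfl
              intro v _
              rw [Finset.filter_mem_eq_inter, Finset.inter_comm]
          _ = ∑ v ∈ A1, ∑ y ∈ Y, (if y ∈ red v then 1 else 0) := by
              apply Finset.sum_congr rfl
              intro v _
              rw [Finset.card_filter]
          _ = ∑ y ∈ Y, ∑ v ∈ A1, (if y ∈ red v then 1 else 0) := Finset.sum_comm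
          _ = ∑ y ∈ Y, (A1.filter (fun v => y ∈ red v)).card := by
              apply Finset.sum_congr rfl
              intro y _
              rw [Finset.card_filter]
      have hA1card : a * M ^ (b'' + 1) ≤ A0.card + A1.card := by
        have := Finset.card_filter_add_card_filter_not
          (s := A') (p := fun v => red v = ∅)
        simp only [← hA0def] at this
        have hA1eq : (A'.filter (fun v => ¬ red v = ∅)).card = A1.card := rfl
        omega
      -- find a popular y
      have hpop : ∃ y ∈ Y, a * M ^ b'' ≤ (A1.filter (fun v => y ∈ red v)).card := by
        by_contra hnone
        push_neg at hnone
        have hbound : ∑ y ∈ Y, (A1.filter (fun v => y ∈ red v)).card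
            ≤ Y.card * (a * M ^ b'' - 1) := by
          calc ∑ y ∈ Y, (A1.filter (fun v => y ∈ red v)).card
              ≤ ∑ _y ∈ Y, (a * M ^ b'' - 1) := by
                apply Finset.sum_le_sum
                intro y hy
                have := hnone y hy
                omega
            _ = Y.card * (a * M ^ b'' - 1) := by rw [Finset.sum_const, smul_eq_mul]
        -- arithmetic contradiction
        set t := a * M ^ b'' with htdef
        have ht2 : 2 ≤ t := by
          calc 2 ≤ a := ha
            _ = a * 1 := by ring
            _ ≤ a * M ^ b'' := Nat.mul_le_mul_left a (Nat.one_le_pow _ _ hM1)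
        obtain ⟨s, hs⟩ : ∃ s, t = s + 1 := ⟨t - 1, by omega⟩
        have hs1 : 1 ≤ s := by omega
        have hklℓ : (D.card + A0.card) * ℓ ≤ M := by
          rw [hMdef]
          exact Nat.mul_le_mul_right ℓ hkd
        have hMain : t * M ≤ A0.card + A1.card := by
          have : a * M ^ (b'' + 1) = t * M := by rw [htdef]; ring
          omega
        have hA1up : A1.card ≤ D.card * ℓ * (t - 1) := by
          calc A1.card ≤ ∑ y ∈ Y, (A1.filter (fun v => y ∈ red v)).card := hsum
            _ ≤ Y.card * (t - 1) := hbound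
            _ ≤ D.card * ℓ * (t - 1) := Nat.mul_le_mul_right _ hYcard
        set k := D.card
        set d := A0.card
        have h1 : (s + 1) * M ≤ d + k * ℓ * s := by
          rw [hs] at hMain hA1up
          simp only [Nat.add_sub_cancel] at hA1up
          omega
        have h2 : k * ℓ * s + d * ℓ * s ≤ M * s := by
          calc k * ℓ * s + d * ℓ * s = ((k + d) * ℓ) * s := by ring
            _ ≤ M * s := Nat.mul_le_mul_right s hklℓ
        nlinarith [Nat.one_le_iff_ne_zero.mp hs1, hM1, hs1,
          Nat.mul_le_mul (Nat.mul_le_mul (le_refl d) hℓ) hs1]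
      obtain ⟨y, hyY, hycard⟩ := hpop
      -- apply induction hypothesis
      set A'' := A1.filter (fun v => y ∈ red v) with hA''def
      have hyB : y ∈ B := by
        rw [hYdef, Finset.mem_biUnion] at hyY
        obtain ⟨v, _, hyv⟩ := hyY
        have : y ∈ bipNbhd B E v := (Finset.mem_sdiff.mp hyv).1
        exact Finset.mem_filter.mp this |>.1
      apply ih (insert y C) A''
      · exact (Finset.filter_subset _ _).trans (hA1A'.trans hA'A)
      · exact Finset.insert_subset hyB hCB
      · intro v hv
        rw [hA''def, Finset.mem_filter] at hv
        apply Finset.insert_subset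
        · exact (Finset.mem_sdiff.mp hv.2).1
        · exact hCN v (hA1A' hv.1)
      · have hyC : y ∉ C := by
          have hne : A''.Nonempty := by
            rw [← Finset.card_pos]
            have : 0 < a * M ^ b'' := Nat.mul_pos (by omega) (pow_pos hM1 b'')
            omega
          obtain ⟨v, hv⟩ := hne
          rw [hA''def, Finset.mem_filter] at hv
          exact (Finset.mem_sdiff.mp hv.2).2
        rw [Finset.card_insert_of_notMem hyC]
        omega
      · exact hycard

/-- the `K_{a,b}`-free sunflower lemma. -/
theorem stmt_5 {α β : Type*} [DecidableEq α] [DecidableEq β]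
    (A : Finset α) (B : Finset β) (E : Finset (α × β)) (hE : E ⊆ A ×ˢ B)
    (a b w ℓ : ℕ) (ha : 2 ≤ a) (hb : 1 ≤ b) (hw : 2 ≤ w) (hℓ : 1 ≤ ℓ)
    (hfree : bipKabFree A B E a b)
    (hdeg : ∀ v ∈ A, (bipNbhd B E v).card ≤ ℓ)
    (hA : A.card ≥ a * ((w - 1) * ℓ) ^ b) :
    ∃ S ⊆ A, S.card = w ∧ bipSunflower B E S := by
  exact key_lemma A B E a b w ℓ ha hw hℓ hfree hdeg b ∅ A
    (Finset.Subset.refl A) (Finset.empty_subset B)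
    (fun v _ => Finset.empty_subset _) (by simp) hA
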